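/- Let K be a field of characteristic zero, a ∈ lie_m^m any tuple, b ∈ lie_n^n a tuple such that D_b is special, and 1 ≤ i ≤ m. Let U := D_{a ∘_i 0} be the tangential derivation of lie_{m+n−1} attached to the tuple a ∘_i 0 (with entries Φ_i(a_j) for j < i, the entry Φ_i(a_i) repeated in slots i, …, i+n−1, and Φ_i(a_j) in slot j+n−1 for j > i), and let V := D_{0 ∘_i b} be the tangential derivation attached to the tuple with entries Ψ_i(b_k) in slots i, …, i+n−1 and 0 elsewhere. Then the derivations U and V commute: ⁅U, V⁆ = U∘V − V∘U = 0. -/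

import Mathlib

open FreeLieAlgebra

variable (K : Type) [Field K] [CharZero K]

/-- The free Lie algebra over `K` on `N` generators `x_1, …, x_N`
(indexed here 0-based by `Fin N`). -/
abbrev lieF (N : ℕ) : Type := FreeLieAlgebra K (Fin N)

/-- The `(k+1)`-st generator of `lieF K N` (0-based index `k`), junk value `0` out of range. -/
noncomputable def xg (N k : ℕ) : lieF K N :=
  if h : k < N then FreeLieAlgebra.of K (⟨k, h⟩ : Fin N) else 0

/-- The Lie algebra homomorphism `Φ_i : lie_m → lie_{m+n-1}` sending (0-based) `x_j ↦ x_j`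
for `j < i`, `x_i ↦ x_i + x_{i+1} + ⋯ + x_{i+n-1}`, and `x_j ↦ x_{j+n-1}` for `j > i`. -/
noncomputable def PhiL (m n i : ℕ) : lieF K m →ₗ⁅K⁆ lieF K (m + n - 1) :=
  FreeLieAlgebra.lift K fun j : Fin m =>
    if (j : ℕ) < i then xg K (m + n - 1) (j : ℕ)
    else if (j : ℕ) = i then ∑ t : Fin n, xg K (m + n - 1) (i + (t : ℕ))
    else xg K (m + n - 1) ((j : ℕ) + n - 1)

/-- The Lie algebra homomorphism `Ψ_i : lie_n → lie_{m+n-1}` sending (0-based)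
`x_j ↦ x_{i+j}`. -/
noncomputable def PsiL (m n i : ℕ) : lieF K n →ₗ⁅K⁆ lieF K (m + n - 1) :=
  FreeLieAlgebra.lift K fun j : Fin n => xg K (m + n - 1) (i + (j : ℕ))

/-- The partial composition `f ∘_i g := Φ_i(f) + Ψ_i(g)` of free Lie algebra elements
(the pivot `i` is 0-based). -/
noncomputable def compL {m n : ℕ} (f : lieF K m) (i : ℕ) (g : lieF K n) :
    lieF K (m + n - 1) :=
  PhiL K m n i f + PsiL K m n i g

/-- The canonical identification `lie_N ≅ lie_{N'}` for `N = N'`. -/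
noncomputable def recastL {N N' : ℕ} (hNN : N = N') : lieF K N →ₗ⁅K⁆ lieF K N' :=
  FreeLieAlgebra.lift K fun j => FreeLieAlgebra.of K (Fin.cast hNN j)

/-- The Lie algebra of derivations of `lie_N`. -/
abbrev DerL (N : ℕ) : Type := LieDerivation K (lieF K N) (lieF K N)

/-- Entry of a tuple at a natural-number index (junk value `0` out of range). -/
noncomputable def tget {N : ℕ} (a : Fin N → lieF K N) (k : ℕ) : lieF K N :=
  if h : k < N then a ⟨k, h⟩ else 0

/-- The composed tuple `a ∘_i b ∈ (lie_{m+n-1})^{m+n-1}` (0-based indices): its entries are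
`Φ_i(a_j)` in slot `j` for `j < i`, `Φ_i(a_i) + Ψ_i(b_k)` in slot `i+k` for `0 ≤ k < n`,
and `Φ_i(a_j)` in slot `j+n-1` for `j > i`. -/
noncomputable def compTup {m n : ℕ} (a : Fin m → lieF K m) (i : ℕ)
    (b : Fin n → lieF K n) : Fin (m + n - 1) → lieF K (m + n - 1) := fun k =>
  if (k : ℕ) < i then PhiL K m n i (tget K a (k : ℕ))
  else if (k : ℕ) < i + n then
    PhiL K m n i (tget K a i) + PsiL K m n i (tget K b ((k : ℕ) - i))
  else PhiL K m n i (tget K a ((k : ℕ) + 1 - n))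

set_option linter.unusedSectionVars false

lemma lieSpan_range_of_eq_top (X : Type) :
    LieSubalgebra.lieSpan K (FreeLieAlgebra K X) (Set.range (FreeLieAlgebra.of K)) = ⊤ := by
  set S := LieSubalgebra.lieSpan K (FreeLieAlgebra K X) (Set.range (FreeLieAlgebra.of K))
  have hmem : ∀ x : X, FreeLieAlgebra.of K x ∈ S :=
    fun x => LieSubalgebra.subset_lieSpan ⟨x, rfl⟩
  let g : FreeLieAlgebra K X →ₗ⁅K⁆ S :=
    FreeLieAlgebra.lift K fun x => (⟨FreeLieAlgebra.of K x, hmem x⟩ : S)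
  have key : S.incl.comp g = LieHom.id := by
    apply FreeLieAlgebra.hom_ext
    intro x
    simp [g, FreeLieAlgebra.lift_of_apply]
  rw [eq_top_iff]
  intro y _
  have : S.incl (g y) = y := by
    have := congrArg (fun h : FreeLieAlgebra K X →ₗ⁅K⁆ FreeLieAlgebra K X => h y) key
    simpa using this
  rw [← this]
  exact (g y).2

lemma der_along {X L' : Type} [LieRing L'] [LieAlgebra K L']
    (f : FreeLieAlgebra K X →ₗ⁅K⁆ L') (D : LieDerivation K L' L') (y : L')
    (h : ∀ j : X, D (f (FreeLieAlgebra.of K j)) = ⁅f (FreeLieAlgebra.of K j), y⁆) :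
    ∀ x, D (f x) = ⁅f x, y⁆ := by
  intro x
  have hx : x ∈ LieSubalgebra.lieSpan K (FreeLieAlgebra K X)
      (Set.range (FreeLieAlgebra.of K)) := by
    rw [lieSpan_range_of_eq_top]; trivial
  refine LieSubalgebra.lieSpan_induction (R := K) (p := fun t _ => D (f t) = ⁅f t, y⁆)
    ?_ ?_ ?_ ?_ ?_ hx
  · rintro x ⟨j, rfl⟩; exact h j
  · simp
  · intro x z _ _ hx hz; simp [hx, hz]
  · intro r x _ hx; simp [hx]
  · intro x z _ _ hx hz
    simp only [LieHom.map_lie, LieDerivation.apply_lie_eq_add, hx, hz]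
    rw [lie_lie]
    rw [← lie_skew y ⁅f x, f z⁆]
    rw [← lie_skew y (f z), lie_neg]
    abel

lemma tget_zero {N : ℕ} (k : ℕ) : tget K (fun _ : Fin N => (0 : lieF K N)) k = 0 := by
  unfold tget; split <;> rfl

lemma xg_lt {N k : ℕ} (h : k < N) : xg K N k = FreeLieAlgebra.of K (⟨k, h⟩ : Fin N) :=
  dif_pos h

lemma lieHom_map_sum {L1 L2 : Type} [LieRing L1] [LieAlgebra K L1]
    [LieRing L2] [LieAlgebra K L2] (f : L1 →ₗ⁅K⁆ L2) {ι : Type} (s : Finset ι)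
    (g : ι → L1) : f (∑ t ∈ s, g t) = ∑ t ∈ s, f (g t) := by
  rw [← LieHom.coe_toLinearMap]
  exact map_sum _ _ _

lemma jac {L : Type} [LieRing L] (x c d : L) :
    ⁅x, ⁅d, c⁆⁆ + ⁅⁅x, c⁆, d⁆ - ⁅⁅x, d⁆, c⁆ = 0 := by
  rw [lie_lie x c d, (lie_skew ⁅x, d⁆ c).symm, ← lie_skew d c, lie_neg]
  abel

/-- Let `a ∈ lie_m^m` be any tuple and `b ∈ lie_n^n` a tuple such that `D_b` is special.
Then the tangential derivations `U := D_{a∘_i0}` and `V := D_{0∘_ib}` of `lie_{m+n-1}`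
commute: `⁅U, V⁆ = 0` (indices 0-based). -/
theorem comp_parts_commute (m n : ℕ) (hn : 1 ≤ n) (i : ℕ) (hi : i < m)
    (a : Fin m → lieF K m) (b : Fin n → lieF K n)
    (Db : DerL K n)
    (hDb : ∀ k : Fin n, Db (FreeLieAlgebra.of K k) = ⁅FreeLieAlgebra.of K k, b k⁆)
    (hDbs : Db (∑ k : Fin n, FreeLieAlgebra.of K k) = 0)
    (U V : DerL K (m + n - 1))
    (hU : ∀ k : Fin (m + n - 1),
      U (FreeLieAlgebra.of K k) =
        ⁅FreeLieAlgebra.of K k, compTup K a i (fun _ => (0 : lieF K n)) k⁆)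
    (hV : ∀ k : Fin (m + n - 1),
      V (FreeLieAlgebra.of K k) =
        ⁅FreeLieAlgebra.of K k, compTup K (fun _ => (0 : lieF K m)) i b k⁆) :
    ⁅U, V⁆ = 0 := by
  -- values of the composed tuples
  have hcmid : ∀ k : Fin (m + n - 1), i ≤ (k : ℕ) → (k : ℕ) < i + n →
      compTup K a i (fun _ => (0 : lieF K n)) k = PhiL K m n i (tget K a i) := by
    intro k h1 h2
    unfold compTup
    rw [if_neg (by omega), if_pos h2, tget_zero, map_zero, add_zero]
  have hdmid : ∀ k : Fin (m + n - 1), i ≤ (k : ℕ) → (k : ℕ) < i + n →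
      compTup K (fun _ => (0 : lieF K m)) i b k
        = PsiL K m n i (tget K b ((k : ℕ) - i)) := by
    intro k h1 h2
    unfold compTup
    rw [if_neg (by omega), if_pos h2, tget_zero, map_zero, zero_add]
  have hcran : ∀ k : Fin (m + n - 1), ∃ f : lieF K m,
      compTup K a i (fun _ => (0 : lieF K n)) k = PhiL K m n i f := by
    intro k
    unfold compTup
    split_ifs with h1 h2
    · exact ⟨_, rfl⟩
    · exact ⟨tget K a i, by rw [tget_zero, map_zero, add_zero]⟩
    · exact ⟨_, rfl⟩
  have hdzero : ∀ k : Fin (m + n - 1), ((k : ℕ) < i ∨ i + n ≤ (k : ℕ)) →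
      compTup K (fun _ => (0 : lieF K m)) i b k = 0 := by
    intro k h
    unfold compTup
    split_ifs with h1 h2
    · rw [tget_zero, map_zero]
    · omega
    · rw [tget_zero, map_zero]
  -- Claim A : U on the image of Ψ
  have claimA : ∀ f : lieF K n,
      U (PsiL K m n i f) = ⁅PsiL K m n i f, PhiL K m n i (tget K a i)⁆ := by
    refine der_along K _ U _ ?_
    intro j
    have hij : i + (j : ℕ) < m + n - 1 := by have := j.isLt; omega
    have hPsi : PsiL K m n i (FreeLieAlgebra.of K j)
        = FreeLieAlgebra.of K (⟨i + (j : ℕ), hij⟩ : Fin (m + n - 1)) := by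
      rw [PsiL, FreeLieAlgebra.lift_of_apply, xg_lt K hij]
    rw [hPsi, hU]
    congr 1
    exact hcmid _ (by simp) (by simpa using j.isLt)
  -- Claim B : V vanishes on the image of Φ
  have claimB : ∀ f : lieF K m, V (PhiL K m n i f) = 0 := by
    have key : ∀ f : lieF K m, V (PhiL K m n i f) = ⁅PhiL K m n i f, (0 : lieF K (m+n-1))⁆ := by
      refine der_along K _ V _ ?_
      intro j
      rw [lie_zero, PhiL, FreeLieAlgebra.lift_of_apply]
      split_ifs with h1 h2
      · have hj : (j : ℕ) < m + n - 1 := by have := j.isLt; omega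
        rw [xg_lt K hj, hV]
        rw [hdzero _ (Or.inl (by simpa using h1)), lie_zero]
      · -- the sum case  j = i
        have hit : ∀ t : Fin n, i + (t : ℕ) < m + n - 1 := by
          intro t; have := t.isLt; omega
        have hterm : ∀ t : Fin n, V (xg K (m + n - 1) (i + (t : ℕ)))
            = ⁅FreeLieAlgebra.of K (⟨i + (t : ℕ), hit t⟩ : Fin (m + n - 1)),
                PsiL K m n i (b t)⁆ := by
          intro t
          rw [xg_lt K (hit t), hV]
          congr 1
          rw [hdmid _ (by simp) (by simpa using t.isLt)]
          congr 1
          unfold tget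
          rw [dif_pos (show i + (t : ℕ) - i < n by simpa using t.isLt)]
          congr 1
          ext
          simp
        rw [map_sum]
        have hsum : ∑ t : Fin n, V (xg K (m + n - 1) (i + (t : ℕ)))
            = PsiL K m n i (Db (∑ k : Fin n, FreeLieAlgebra.of K k)) := by
          rw [map_sum, lieHom_map_sum]
          refine Finset.sum_congr rfl fun t _ => ?_
          rw [hterm t, hDb, LieHom.map_lie]
          congr 1
          rw [PsiL, FreeLieAlgebra.lift_of_apply, xg_lt K (hit t)]
        rw [hsum, hDbs, map_zero]
      · have hj : (j : ℕ) + n - 1 < m + n - 1 := by have := j.isLt; omega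
        rw [xg_lt K hj, hV]
        rw [hdzero _ (Or.inr (by simp; omega)), lie_zero]
    intro f
    rw [key f, lie_zero]
  -- The final computation on generators
  have final : ∀ x : lieF K (m + n - 1), (⁅U, V⁆ : LieDerivation K _ _) x = 0 := by
    have key := der_along K (LieHom.id : lieF K (m+n-1) →ₗ⁅K⁆ lieF K (m+n-1))
      ⁅U, V⁆ 0 ?_
    · intro x
      have := key x
      simpa using this
    intro k
    simp only [LieHom.id_apply, lie_zero]
    rw [LieDerivation.commutator_apply]
    set c := compTup K a i (fun _ => (0 : lieF K n)) k with hc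
    set d := compTup K (fun _ => (0 : lieF K m)) i b k with hd
    have hVc : V c = 0 := by
      obtain ⟨f, hf⟩ := hcran k
      rw [hc, hf, claimB]
    by_cases hcase : (k : ℕ) < i ∨ i + n ≤ (k : ℕ)
    · have hd0 : d = 0 := hdzero k hcase
      rw [hV k, hU k, ← hc, ← hd, hd0, lie_zero, map_zero,
        LieDerivation.apply_lie_eq_add, hV k, ← hd, hd0, lie_zero, hVc, lie_zero,
        zero_lie]
      simp
    · push_neg at hcase
      have hUd : U d = ⁅d, c⁆ := by
        rw [hd, hdmid k hcase.1 hcase.2, claimA, ← hdmid k hcase.1 hcase.2, ← hd,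
          ← hcmid k hcase.1 hcase.2, ← hc]
      rw [hV k, hU k, ← hc, ← hd,
        LieDerivation.apply_lie_eq_add, LieDerivation.apply_lie_eq_add,
        hU k, hV k, ← hc, ← hd, hUd, hVc, lie_zero]
      -- ⁅⁅x,c⁆,d⁆ + ⁅x,⁅d,c⁆⁆ - ⁅⁅x,d⁆,c⁆ = 0
      rw [zero_add]
      exact jac _ _ _
  ext x
  rw [final x]
  rfl
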